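/- The composition of two selfic surjections is selfic: if f: {1,...,k} → {1,...,ℓ} and g: {1,...,ℓ} → {1,...,m} are selfic surjections, then g ∘ f is a selfic surjection. -/
import Mathlib


/-- `firstIn f j` is the minimum of the preimage `f⁻¹(j)`. -/
def firstIn {k l : ℕ} (f : Fin k → Fin l) (j : Fin l) : WithTop (Fin k) :=
  (Finset.univ.filter fun i => f i = j).min

/-- A surjection `f : Fin k → Fin l` is *selfic* if `j ↦ min f⁻¹(j)` is monotone. -/
def IsSelfic {k l : ℕ} (f : Fin k → Fin l) : Prop :=
  Function.Surjective f ∧ Monotone (firstIn f)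

lemma firstIn_nonempty {k l : ℕ} {f : Fin k → Fin l} (hf : Function.Surjective f) (j : Fin l) :
    (Finset.univ.filter fun i => f i = j).Nonempty := by
  obtain ⟨i, hi⟩ := hf j
  exact ⟨i, Finset.mem_filter.mpr ⟨Finset.mem_univ i, hi⟩⟩

/-- the composition of selfic surjections is a selfic surjection. -/
theorem isSelfic_comp {k l m : ℕ} (f : Fin k → Fin l) (g : Fin l → Fin m)
    (hf : IsSelfic f) (hg : IsSelfic g) : IsSelfic (g ∘ f) := by
  obtain ⟨hfs, hfm⟩ := hf
  obtain ⟨hgs, hgm⟩ := hg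
  refine ⟨hgs.comp hfs, ?_⟩
  intro j j' hjj
  by_cases h : (Finset.univ.filter fun i => (g ∘ f) i = j').Nonempty
  · -- i' : minimal element of (g∘f)⁻¹(j')
    set i' := Finset.min' _ h with hi'def
    have hi'mem := Finset.min'_mem _ h
    have hgfi' : g (f i') = j' := (Finset.mem_filter.mp hi'mem).2
    have hmin' : firstIn (g ∘ f) j' = (i' : WithTop (Fin k)) :=
      (Finset.coe_min' h).symm
    -- s : minimal element of g⁻¹(j)
    have hsne := firstIn_nonempty hgs j
    set s := Finset.min' _ hsne with hsdef
    have hsmem := Finset.min'_mem _ hsne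
    have hgs' : g s = j := (Finset.mem_filter.mp hsmem).2
    have hsmin : firstIn g j = (s : WithTop (Fin l)) := (Finset.coe_min' hsne).symm
    -- firstIn g j' ≤ f i'
    have h1 : firstIn g j' ≤ ((f i' : Fin l) : WithTop (Fin l)) :=
      Finset.min_le (Finset.mem_filter.mpr ⟨Finset.mem_univ _, hgfi'⟩)
    have h2 : (s : WithTop (Fin l)) ≤ ((f i' : Fin l) : WithTop (Fin l)) :=
      hsmin ▸ le_trans (hgm hjj) h1
    have hsle : s ≤ f i' := WithTop.coe_le_coe.mp h2
    -- i : minimal element of f⁻¹(s)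
    have hine := firstIn_nonempty hfs s
    set i := Finset.min' _ hine with hidef
    have himem := Finset.min'_mem _ hine
    have hfi : f i = s := (Finset.mem_filter.mp himem).2
    have himin : firstIn f s = (i : WithTop (Fin k)) := (Finset.coe_min' hine).symm
    have h3 : firstIn f (f i') ≤ (i' : WithTop (Fin k)) :=
      Finset.min_le (Finset.mem_filter.mpr ⟨Finset.mem_univ _, rfl⟩)
    have h4 : (i : WithTop (Fin k)) ≤ (i' : WithTop (Fin k)) :=
      himin ▸ le_trans (hfm hsle) h3
    have h5 : firstIn (g ∘ f) j ≤ (i : WithTop (Fin k)) := by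
      apply Finset.min_le
      exact Finset.mem_filter.mpr ⟨Finset.mem_univ _, by simp [hfi, hgs']⟩
    rw [hmin']
    exact le_trans h5 h4
  · have : (Finset.univ.filter fun i => (g ∘ f) i = j') = ∅ :=
      Finset.not_nonempty_iff_eq_empty.mp h
    simp only [firstIn, this, Finset.min_empty]
    exact le_top
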